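/- Let $v$ be a non-dyadic finite place of a number field $F$, let $\mathfrak{o}_v$ be the valuation ring of $F_v$, and suppose $q(x,y,z) = xy - \delta z^2$ with $\delta \in \mathfrak{o}_v^\times$. Let $a \in \mathfrak{o}_v \setminus \{0\}$ with $-a\delta \notin F_v^{\times 2}$ and with $v(a)$ even. Then for every solution $(x_0,y_0,z_0) \in \mathfrak{o}_v^3$ of $q(x,y,z)=a$ in which at least one coordinate is a unit, the valuation $v(x_0)$ is even. -/

import Mathlib

open IsDedekindDomain Multiplicative Filter

section HenselSq

private abbrev ZM0 := WithZero (Multiplicative ℤ)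

private lemma pow_two_pow_lt (t : ZM0) (ht : t < 1) (γ : ZM0ˣ) :
    ∃ N : ℕ, t ^ (2 ^ N) < (γ : ZM0) := by
  rcases eq_or_ne t 0 with rfl | ht0
  · exact ⟨0, by simp [zero_pow, (zero_lt_iff.mpr γ.ne_zero)]⟩
  · obtain ⟨s, rfl⟩ := WithZero.ne_zero_iff_exists.mp ht0
    obtain ⟨c, hc⟩ := WithZero.ne_zero_iff_exists.mp γ.ne_zero
    refine ⟨(-(toAdd c)).toNat, ?_⟩
    rw [← hc, ← WithZero.coe_pow, WithZero.coe_lt_coe]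
    have hs : toAdd s ≤ -1 := by
      have h1 := ht
      rw [← WithZero.coe_one, WithZero.coe_lt_coe] at h1
      have h2 : toAdd s < 0 := h1
      omega
    rw [← toAdd_lt, toAdd_pow]
    have h1 : (-(toAdd c) : ℤ) < 2 ^ (-(toAdd c)).toNat := by
      calc (-(toAdd c) : ℤ) ≤ ((-(toAdd c)).toNat : ℤ) := Int.self_le_toNat _
        _ < ((2 ^ (-(toAdd c)).toNat : ℕ) : ℤ) := by exact_mod_cast Nat.lt_two_pow_self
        _ = 2 ^ (-(toAdd c)).toNat := by push_cast; ring
    have h2 : (2 ^ (-(toAdd c)).toNat : ℕ) • toAdd s ≤ (2 ^ (-(toAdd c)).toNat : ℤ) * (-1) := by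
      rw [nsmul_eq_mul]
      push_cast
      have := mul_le_mul_of_nonneg_left hs (by positivity : (0:ℤ) ≤ 2 ^ (-(toAdd c)).toNat)
      linarith
    have h3 : ((2:ℤ) ^ (-(toAdd c)).toNat) * (-1) < toAdd c := by nlinarith [h1]
    calc ((2 ^ (-(toAdd c)).toNat : ℕ) : ℤ) • toAdd s ≤ _ := h2
      _ < toAdd c := h3

variable {K : Type*} [Field K] [Valued K ZM0] [CompleteSpace K]

private lemma exists_sqrt (h2 : Valued.v (2 : K) = 1) (e : K) (he : Valued.v (e - 1) < 1) :
    ∃ b : K, b ^ 2 = e := by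
  set w : Valuation K ZM0 := Valued.v with hw
  set t : ZM0 := w (e - 1) with htdef
  have ht : t < 1 := he
  have ht1 : t ≤ 1 := le_of_lt ht
  have h2ne : (2 : K) ≠ 0 := by
    intro h; rw [h] at h2; simp at h2
  set f : ℕ → K := fun n => Nat.rec (1 : K) (fun _ b => (b + e / b) / 2) n with hf
  have hf0 : f 0 = 1 := rfl
  have hfs : ∀ n, f (n + 1) = (f n + e / f n) / 2 := fun n => rfl
  have inv : ∀ n, w (f n) = 1 ∧ w (f n ^ 2 - e) ≤ t ^ (2 ^ n) := by
    intro n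
    induction n with
    | zero =>
      refine ⟨by simp [hf0], ?_⟩
      rw [hf0, Valuation.map_sub_swap]
      simp [htdef]
    | succ n ih =>
      obtain ⟨ih1, ih2⟩ := ih
      have hfn : f n ≠ 0 := by
        intro h; rw [h] at ih1; simp at ih1
      have hpow : t ^ (2 ^ n) < 1 := by
        calc t ^ (2 ^ n) ≤ t ^ 1 := pow_le_pow_right_of_le_one' ht1 (Nat.one_le_two_pow)
          _ = t := pow_one t
          _ < 1 := ht
      have hdiff : f (n + 1) - f n = (e - f n ^ 2) / (2 * f n) := by
        rw [hfs]; field_simp; ring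
      have hvdiff : w (f (n + 1) - f n) < 1 := by
        rw [hdiff, map_div₀, map_mul, h2, ih1, Valuation.map_sub_swap]
        simpa using lt_of_le_of_lt ih2 hpow
      have h1 : w (f (n + 1)) = 1 := by
        have he1 : f (n + 1) = f n + (f (n + 1) - f n) := by ring
        rw [he1, Valuation.map_add_eq_of_lt_left _ (by rw [ih1]; exact hvdiff), ih1]
      refine ⟨h1, ?_⟩
      have hident : f (n + 1) ^ 2 - e = (f n ^ 2 - e) ^ 2 / (2 ^ 2 * f n ^ 2) := by
        rw [hfs]; field_simp; ring
      rw [hident, map_div₀, map_mul, map_pow, map_pow, map_pow, h2, ih1]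
      simp only [one_pow, mul_one, div_one]
      calc w (f n ^ 2 - e) ^ 2 ≤ (t ^ (2 ^ n)) ^ 2 := pow_le_pow_left' ih2 2
        _ = t ^ (2 ^ (n + 1)) := by rw [← pow_mul, pow_succ]
  have est : ∀ n m, w (f (n + m) - f n) ≤ t ^ (2 ^ n) := by
    intro n m
    induction m with
    | zero => simp [zero_le']
    | succ m ih =>
      have hfn : f (n + m) ≠ 0 := by
        intro h; have := (inv (n + m)).1; rw [h] at this; simp at this
      have hdiff : f (n + m + 1) - f (n + m) = (e - f (n + m) ^ 2) / (2 * f (n + m)) := by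
        rw [hfs]; field_simp; ring
      have hstep : w (f (n + m + 1) - f (n + m)) ≤ t ^ (2 ^ n) := by
        rw [hdiff, map_div₀, map_mul, h2, (inv (n + m)).1, Valuation.map_sub_swap]
        simp only [mul_one, one_mul, div_one]
        exact le_trans (inv (n + m)).2
          (pow_le_pow_right_of_le_one' ht1 (Nat.pow_le_pow_right (by norm_num) (by omega)))
      have hsplit : f (n + (m + 1)) - f n = (f (n + m + 1) - f (n + m)) + (f (n + m) - f n) := by
        show f (n + (m + 1)) - f n = _
        rw [show n + (m + 1) = n + m + 1 by omega]; ring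
      rw [hsplit]
      exact le_trans (Valuation.map_add w _ _) (max_le hstep ih)
  have key : ∀ γ : ZM0ˣ, ∃ N, ∀ i j, N ≤ i → N ≤ j → w (f j - f i) < (γ : ZM0) := by
    intro γ
    obtain ⟨N, hN⟩ := pow_two_pow_lt t ht γ
    refine ⟨N, ?_⟩
    have mono : ∀ i j, N ≤ i → i ≤ j → w (f j - f i) < (γ : ZM0) := by
      intro i j hi hij
      have hj : f j - f i = f (i + (j - i)) - f i := by rw [Nat.add_sub_cancel' hij]
      rw [hj]
      refine lt_of_le_of_lt (le_trans (est i (j - i)) ?_) hN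
      exact pow_le_pow_right_of_le_one' ht1 (Nat.pow_le_pow_right (by norm_num) hi)
    intro i j hi hj
    rcases le_total i j with h | h
    · exact mono i j hi h
    · rw [Valuation.map_sub_swap]; exact mono j i hj h
  have hcauchy : CauchySeq f := by
    rw [CauchySeq, Valued.cauchy_iff]
    refine ⟨Filter.map_neBot, fun γ => ?_⟩
    obtain ⟨N, hN⟩ := key (Units.mk0 _ (MonoidWithZeroHom.ValueGroup₀.embedding_unit_ne_zero γ))
    refine ⟨f '' Set.Ici N, Filter.image_mem_map (Filter.Ici_mem_atTop N), ?_⟩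
    rintro x ⟨i, hi, rfl⟩ y ⟨j, hj, rfl⟩
    exact (Valuation.restrict_lt_iff_lt_embedding _).mpr (hN i j hi hj)
  obtain ⟨b, hb⟩ := cauchySeq_tendsto_of_complete hcauchy
  have htend0 : Filter.Tendsto (fun n => f n ^ 2 - e) Filter.atTop (nhds 0) := by
    rw [(Valued.hasBasis_nhds_zero K ZM0).tendsto_right_iff]
    intro γ _
    obtain ⟨N, hN⟩ := pow_two_pow_lt t ht
      (Units.mk0 _ (MonoidWithZeroHom.ValueGroup₀.embedding_unit_ne_zero γ))
    filter_upwards [Filter.eventually_ge_atTop N] with n hn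
    exact (Valuation.restrict_lt_iff_lt_embedding _).mpr (lt_of_le_of_lt (le_trans (inv n).2
      (pow_le_pow_right_of_le_one' ht1 (Nat.pow_le_pow_right (by norm_num) hn))) hN)
  have htend : Filter.Tendsto (fun n => f n ^ 2 - e) Filter.atTop (nhds (b ^ 2 - e)) :=
    (hb.pow 2).sub_const e
  exact ⟨b, sub_eq_zero.mp (tendsto_nhds_unique htend htend0)⟩

private lemma exists_sqrt' (h2 : Valued.v (2 : K) = 1) (c u : K) (hu : u ≠ 0)
    (h : Valued.v (c - u ^ 2) < Valued.v (u ^ 2)) : ∃ b : K, b ^ 2 = c := by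
  have hu2 : u ^ 2 ≠ 0 := pow_ne_zero _ hu
  have hvu : Valued.v (u ^ 2) ≠ 0 := (Valuation.ne_zero_iff _).mpr hu2
  have he : Valued.v (c / u ^ 2 - 1) < 1 := by
    rw [show c / u ^ 2 - 1 = (c - u ^ 2) / u ^ 2 by field_simp, map_div₀]
    rw [div_lt_iff₀ (zero_lt_iff.mpr hvu)]
    simpa using h
  obtain ⟨b, hb⟩ := exists_sqrt h2 _ he
  exact ⟨b * u, by rw [mul_pow, hb]; field_simp⟩

end HenselSq

/-- `v` a non-dyadic finite place of a number field `F`, `𝓞_v` the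
valuation ring of `F_v`, `q(x,y,z) = xy - δz²` with `δ ∈ 𝓞_v^×`.  Let
`a ∈ 𝓞_v \ {0}` with `-aδ` not a square in `F_v` and `v(a)` even.  Then every
solution `(x₀,y₀,z₀) ∈ 𝓞_v³` of `q = a` with at least one coordinate a unit has
`v(x₀)` even.  (The valuation on `F_v` is the valued-field valuation, with values
in `ℤₘ₀`; a uniformizer has valuation `ofAdd (-1)`.) -/
theorem stmt2 (F : Type*) [Field F] [NumberField F]
    (v : HeightOneSpectrum (NumberField.RingOfIntegers F))
    (hv : (2 : NumberField.RingOfIntegers F) ∉ v.asIdeal)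
    (δ : v.adicCompletionIntegers F) (hδ : IsUnit δ)
    (a : v.adicCompletionIntegers F) (ha : a ≠ 0)
    (hns : ¬ ∃ b : v.adicCompletion F, b ^ 2 = -((a : v.adicCompletion F) * δ))
    (haeven : ∃ m : ℤ, Valued.v (a : v.adicCompletion F) =
      ((ofAdd (2 * m) : Multiplicative ℤ) : WithZero (Multiplicative ℤ)))
    (x₀ y₀ z₀ : v.adicCompletionIntegers F)
    (heq : x₀ * y₀ - δ * z₀ ^ 2 = a)
    (hprim : IsUnit x₀ ∨ IsUnit y₀ ∨ IsUnit z₀) :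
    ∃ m : ℤ, Valued.v (x₀ : v.adicCompletion F) =
      ((ofAdd (2 * m) : Multiplicative ℤ) : WithZero (Multiplicative ℤ)) := by
  have hInt : (Valued.v).Integers (R := v.adicCompletion F) (v.adicCompletionIntegers F) :=
    ⟨Subtype.coe_injective, fun r => r.2, fun r hr => ⟨⟨r, hr⟩, rfl⟩⟩
  have h2 : Valued.v (2 : v.adicCompletion F) = 1 := by
    have h : (2 : v.adicCompletion F) =
        (((2 : NumberField.RingOfIntegers F) : F) : v.adicCompletion F) := by
      have h1 : ((2 : NumberField.RingOfIntegers F) : F) = (2 : F) := by norm_cast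
      rw [h1]; exact (map_ofNat (algebraMap F (v.adicCompletion F)) 2).symm
    rw [h, HeightOneSpectrum.valuedAdicCompletion_eq_valuation',
      HeightOneSpectrum.valuation_of_algebraMap]
    apply le_antisymm (HeightOneSpectrum.intValuation_le_one v _)
    by_contra hlt
    push_neg at hlt
    rw [HeightOneSpectrum.intValuation_lt_one_iff_dvd, Ideal.dvd_span_singleton] at hlt
    exact hv hlt
  have hunit : ∀ x : v.adicCompletionIntegers F,
      IsUnit x ↔ Valued.v (x : v.adicCompletion F) = 1 :=
    fun x => hInt.isUnit_iff_valuation_eq_one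
  have heqK : (x₀ : v.adicCompletion F) * y₀ - δ * z₀ ^ 2 = a := by
    have h := congrArg
      (fun t : v.adicCompletionIntegers F => (t : v.adicCompletion F)) heq
    push_cast at h
    exact h
  have haK : (a : v.adicCompletion F) ≠ 0 := fun h =>
    ha (Subtype.coe_injective (by simpa using h))
  have haV : Valued.v (a : v.adicCompletion F) ≠ 0 := (Valuation.ne_zero_iff _).mpr haK
  have hδ1 : Valued.v (δ : v.adicCompletion F) = 1 := (hunit δ).mp hδ
  by_cases hx : IsUnit x₀
  · exact ⟨0, by rw [(hunit x₀).mp hx]; simp⟩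
  have hxlt : Valued.v (x₀ : v.adicCompletion F) < 1 :=
    lt_of_le_of_ne x₀.2 (fun h => hx ((hunit x₀).mpr h))
  rcases hprim with h | hy | hz
  · exact absurd h hx
  · -- y₀ unit
    have hy1 : Valued.v (y₀ : v.adicCompletion F) = 1 := (hunit y₀).mp hy
    have hxa : Valued.v (x₀ : v.adicCompletion F) =
        Valued.v ((a : v.adicCompletion F) + δ * z₀ ^ 2) := by
      have hxy : (x₀ : v.adicCompletion F) * y₀ = (a : v.adicCompletion F) + δ * z₀ ^ 2 := by
        linear_combination heqK
      rw [show Valued.v ((x₀ : v.adicCompletion F)) =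
        Valued.v ((x₀ : v.adicCompletion F) * y₀) by rw [map_mul, hy1, mul_one], hxy]
    rcases eq_or_ne (Valued.v ((δ : v.adicCompletion F) * z₀ ^ 2))
        (Valued.v (a : v.adicCompletion F)) with hc | hc
    · -- equal values case
      have hz0 : (z₀ : v.adicCompletion F) ≠ 0 := by
        intro h0
        rw [h0] at hc
        simp at hc
        exact haV hc.symm
      have hle : Valued.v ((a : v.adicCompletion F) + δ * z₀ ^ 2) ≤
          Valued.v (a : v.adicCompletion F) :=
        le_trans (Valuation.map_add _ _ _) (by rw [hc]; simp)
      have heqv : Valued.v ((a : v.adicCompletion F) + δ * z₀ ^ 2) =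
          Valued.v (a : v.adicCompletion F) := by
        rcases lt_or_eq_of_le hle with hlt | h
        · exfalso
          apply hns
          refine exists_sqrt' h2 _ ((δ : v.adicCompletion F) * z₀) ?_ ?_
          · exact mul_ne_zero (fun h0 => by rw [h0] at hδ1; simp at hδ1) hz0
          · have hcu : -((a : v.adicCompletion F) * δ) -
                ((δ : v.adicCompletion F) * z₀) ^ 2 =
                -δ * ((a : v.adicCompletion F) + δ * z₀ ^ 2) := by ring
            have hu2 : Valued.v (((δ : v.adicCompletion F) * z₀) ^ 2) =
                Valued.v (a : v.adicCompletion F) := by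
              rw [← hc, map_pow, map_mul, map_mul, map_pow, hδ1]
              simp
            rw [hcu, hu2, map_mul, Valuation.map_neg, hδ1, one_mul]
            exact hlt
        · exact h
      obtain ⟨m, hm⟩ := haeven
      exact ⟨m, by rw [hxa, heqv, hm]⟩
    · -- distinct values case
      have hmax : Valued.v ((a : v.adicCompletion F) + δ * z₀ ^ 2) =
          max (Valued.v (a : v.adicCompletion F))
            (Valued.v ((δ : v.adicCompletion F) * z₀ ^ 2)) :=
        Valuation.map_add_of_distinct_val _ (Ne.symm hc)
      rcases le_total (Valued.v ((δ : v.adicCompletion F) * z₀ ^ 2))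
          (Valued.v (a : v.adicCompletion F)) with hle | hle
      · obtain ⟨m, hm⟩ := haeven
        exact ⟨m, by rw [hxa, hmax, max_eq_left hle, hm]⟩
      · have hz0 : (z₀ : v.adicCompletion F) ≠ 0 := by
          intro h0
          rw [h0] at hle
          simp at hle
          exact ha hle
        have hzV : Valued.v (z₀ : v.adicCompletion F) ≠ 0 := (Valuation.ne_zero_iff _).mpr hz0
        obtain ⟨s, hs⟩ := WithZero.ne_zero_iff_exists.mp hzV
        refine ⟨toAdd s, ?_⟩
        rw [hxa, hmax, max_eq_right hle, map_mul, hδ1, one_mul, map_pow, ← hs,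
          ← WithZero.coe_pow, WithZero.coe_inj]
        rw [two_mul, ofAdd_add, ofAdd_toAdd, sq]
  · -- z₀ unit
    have hz1 : Valued.v (z₀ : v.adicCompletion F) = 1 := (hunit z₀).mp hz
    exfalso
    apply hns
    refine exists_sqrt' h2 _ ((δ : v.adicCompletion F) * z₀) ?_ ?_
    · exact mul_ne_zero (fun h0 => by rw [h0] at hδ1; simp at hδ1)
        (fun h0 => by rw [h0] at hz1; simp at hz1)
    · have hcu : -((a : v.adicCompletion F) * δ) -
          ((δ : v.adicCompletion F) * z₀) ^ 2 =
          -δ * ((x₀ : v.adicCompletion F) * y₀) := by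
        linear_combination ((δ : v.adicCompletion F)) * heqK
      have hu2 : Valued.v (((δ : v.adicCompletion F) * z₀) ^ 2) = 1 := by
        rw [map_pow, map_mul, hδ1, hz1]; simp
      rw [hcu, hu2, map_mul, map_mul, Valuation.map_neg, hδ1, one_mul]
      calc Valued.v (x₀ : v.adicCompletion F) * Valued.v (y₀ : v.adicCompletion F)
          ≤ Valued.v (x₀ : v.adicCompletion F) * 1 := mul_le_mul_right y₀.2 _
        _ < 1 := by rwa [mul_one]
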